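/- Let p ∈ ℝ with p ∉ {−(k+1)/2 : k ∈ ℕ₀}, let P be a real 2×2 matrix, ψ ∈ ℝ, and let ((αₙ,βₙ))ₙ≥₀ be the unique solution of the recurrence (R). Then the following are equivalent: (i) the upper-left entry of P vanishes, i.e. (1,0)·P·(1,0)ᵀ = 0; (ii) β₁ = 0; (iii) βₙ = 0 for all n ≥ 0 (equivalently, the generating function B vanishes identically). -/

import Mathlib

open Matrix MeasureTheory Filter

noncomputable section

def matJ : Matrix (Fin 2) (Fin 2) ℝ := !![0, -1; 1, 0]

def Dpsi (p ψ a : ℝ) : Matrix (Fin 2) (Fin 2) ℝ :=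
  if p = 0 then !![1, 0; ψ * Real.log a, 1]
  else !![1, 0; ψ / (2 * p), 1] * !![a ^ p, 0; 0, a ^ (-p)] * !![1, 0; -ψ / (2 * p), 1]

def HPpsi (p ψ : ℝ) (P : Matrix (Fin 2) (Fin 2) ℝ) (a : ℝ) : Matrix (Fin 2) (Fin 2) ℝ :=
  Dpsi p ψ a * P * (Dpsi p ψ a)ᵀ

def SatRec (p : ℝ) (P : Matrix (Fin 2) (Fin 2) ℝ) (ψ : ℝ) (α β : ℕ → ℝ) : Prop :=
  α 0 = 1 ∧ β 0 = 0 ∧ ∀ n : ℕ,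
    !![α (n + 1), β (n + 1)] =
      (-1 / (((n : ℝ) + 1) * (2 * p + (n : ℝ) + 1))) •
        (!![α n, β n] * (P * matJ * !![2 * p + (n : ℝ) + 1, 0; ψ, (n : ℝ) + 1]))

def genF (c : ℕ → ℝ) (z : ℂ) : ℂ := ∑' n : ℕ, (c n : ℂ) * z ^ n

def rowAB (p ψ : ℝ) (α β : ℕ → ℝ) (a : ℝ) (z : ℂ) : Matrix (Fin 1) (Fin 2) ℂ :=
  !![((a ^ p : ℝ) : ℂ) * genF α ((a : ℂ) * z), ((a ^ p : ℝ) : ℂ) * genF β ((a : ℂ) * z)] *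
    ((Dpsi p ψ a)⁻¹).map Complex.ofReal

/-- vanishing of the upper-left entry of P is equivalent to β₁ = 0
and to the vanishing of the whole sequence (βₙ). -/
theorem statement5 (p : ℝ) (hp : ∀ k : ℕ, p ≠ -((k : ℝ) + 1) / 2)
    (P : Matrix (Fin 2) (Fin 2) ℝ) (ψ : ℝ) (α β : ℕ → ℝ)
    (hrec : SatRec p P ψ α β) :
    List.TFAE [P 0 0 = 0, β 1 = 0, ∀ n : ℕ, β n = 0] := by
  obtain ⟨hα0, hβ0, hR⟩ := hrec
  have hden : ∀ n : ℕ, 2 * p + (n:ℝ) + 1 ≠ 0 := by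
    intro n h; exact hp n (by linarith)
  have hβ : ∀ n : ℕ, β (n + 1) * (2 * p + (n:ℝ) + 1) = P 0 0 * α n + P 1 0 * β n := by
    intro n
    have h := congrFun (congrFun (hR n) 0) 1
    have hn1 : ((n:ℝ) + 1) ≠ 0 := by positivity
    simp [Matrix.mul_apply, Matrix.vecMul, dotProduct, Fin.sum_univ_two, matJ, Matrix.smul_apply] at h
    have hprod : ((n:ℝ) + 1) * (2 * p + (n:ℝ) + 1) ≠ 0 := mul_ne_zero hn1 (hden n)
    rw [h]
    have hd := hden n
    field_simp
    ring
  tfae_have 1 → 3 := by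
    intro h0
    intro n
    induction n with
    | zero => exact hβ0
    | succ k ih =>
        have := hβ k
        rw [h0, ih] at this
        simp at this
        rcases this with h | h
        · exact h
        · exact absurd h (hden k)
  tfae_have 3 → 2 := fun h => h 1
  tfae_have 2 → 1 := by
    intro h1
    have := hβ 0
    rw [h1, hα0, hβ0] at this
    push_cast at this
    linarith
  tfae_finish
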